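/- Let E ∪_m F be an adjunction topological graph such that G⁰ is negatively invariant in F⁰ and m : G → E satisfies condition (F3). Then the following are equivalent: (1) E⁰ is negatively invariant in (E ∪_m F)⁰; (2) the canonical pair p = (p¹, p⁰) satisfies condition (F3), i.e., p⁰(F⁰_sing) ⊆ (E ∪_m F)⁰_sing. -/

import Mathlib

open Set Topology

/-- A continuous map which is proper: preimages of compact sets are compact. -/
def ProperCont {X Y : Type*} [TopologicalSpace X] [TopologicalSpace Y] (f : X → Y) : Prop :=
  Continuous f ∧ ∀ K : Set Y, IsCompact K → IsCompact (f ⁻¹' K)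

/-- The raw data of a (topological) graph: a source and a range map from edges to vertices. -/
structure GraphData (V E : Type*) where
  s : E → V
  r : E → V

/-- `g` is a topological graph: source and range are continuous and the range map is a
local homeomorphism. -/
structure IsTopGraph {V E : Type*} [TopologicalSpace V] [TopologicalSpace E]
    (g : GraphData V E) : Prop where
  s_cont : Continuous g.s
  r_cont : Continuous g.r
  r_locHomeo : IsLocalHomeomorph g.r

namespace GraphData

variable {V E : Type*} [TopologicalSpace V] [TopologicalSpace E]

/-- `E⁰_fin`: vertices having a neighborhood whose preimage under the source map is compact. -/
def finSet (g : GraphData V E) : Set V := {v | ∃ U ∈ nhds v, IsCompact (g.s ⁻¹' U)}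

/-- `E⁰_sink = E⁰ \ closure (s(E¹))`. -/
def sinkSet (g : GraphData V E) : Set V := (closure (Set.range g.s))ᶜ

/-- `E⁰_reg = E⁰_fin \ closure (E⁰_sink)`. -/
def regSet (g : GraphData V E) : Set V := g.finSet \ closure g.sinkSet

/-- `E⁰_sing = E⁰ \ E⁰_reg`. -/
def singSet (g : GraphData V E) : Set V := (g.regSet)ᶜ

/-- A set of vertices is negatively invariant if every regular vertex in it emits an
edge whose range lies in it. -/
def NegInvariant (g : GraphData V E) (Y : Set V) : Prop :=
  ∀ v ∈ Y ∩ g.regSet, ∃ e, g.s e = v ∧ g.r e ∈ Y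

/-- A topological graph is row-finite if `s(E¹) = E⁰_reg`. -/
def RowFinite (g : GraphData V E) : Prop := Set.range g.s = g.regSet

/-- The restriction of a graph to a pair of subsets of vertices and edges. -/
def restrict (g : GraphData V E) (G0 : Set V) (G1 : Set E)
    (hs : Set.MapsTo g.s G1 G0) (hr : Set.MapsTo g.r G1 G0) : GraphData G0 G1 where
  s := fun e => ⟨g.s e, hs e.2⟩
  r := fun e => ⟨g.r e, hr e.2⟩

end GraphData

/-- `(G0, G1)` determines a closed subgraph of `g` (in particular it is itself
a topological graph with the restricted source and range maps). -/
structure IsClosedSubgraph {V E : Type*} [TopologicalSpace V] [TopologicalSpace E]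
    (g : GraphData V E) (G0 : Set V) (G1 : Set E) : Prop where
  s_maps : Set.MapsTo g.s G1 G0
  r_maps : Set.MapsTo g.r G1 G0
  closed0 : IsClosed G0
  closed1 : IsClosed G1
  isGraph : IsTopGraph (g.restrict G0 G1 s_maps r_maps)

/-- A regular closed subgraph: a closed subgraph whose vertex set is negatively invariant
and such that `r⁻¹(G⁰) ⊆ G¹`. -/
structure IsRegularClosedSubgraph {V E : Type*} [TopologicalSpace V] [TopologicalSpace E]
    (g : GraphData V E) (G0 : Set V) (G1 : Set E) extends IsClosedSubgraph g G0 G1 : Prop where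
  negInv : g.NegInvariant G0
  r_pre : g.r ⁻¹' G0 ⊆ G1

/-- A regular factor map `(m¹, m⁰) : gG → gF` between topological graphs: a pair of proper
continuous maps satisfying (F1), (F2) and (F3). -/
structure IsRegularFactorMap {V1 E1 V2 E2 : Type*}
    [TopologicalSpace V1] [TopologicalSpace E1] [TopologicalSpace V2] [TopologicalSpace E2]
    (gG : GraphData V1 E1) (gF : GraphData V2 E2) (m0 : V1 → V2) (m1 : E1 → E2) : Prop where
  proper0 : ProperCont m0
  proper1 : ProperCont m1
  F1r : ∀ e, gF.r (m1 e) = m0 (gG.r e)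
  F1s : ∀ e, gF.s (m1 e) = m0 (gG.s e)
  F2 : ∀ (x : E2) (v : V1), gF.r x = m0 v → ∃! e : E1, m1 e = x ∧ gG.r e = v
  F3 : m0 '' gG.singSet ⊆ gF.singSet

section Adjunction

/-- The relation generating the adjunction-space identification: `a ∈ A ⊆ Y` is glued
to `f a ∈ X`. -/
inductive AdjRel {X Y : Type*} {A : Set Y} (f : A → X) : X ⊕ Y → X ⊕ Y → Prop
  | glue (a : A) : AdjRel f (Sum.inl (f a)) (Sum.inr a.1)

/-- The adjunction space `X ∪_f Y`. -/
def AdjSpace {X Y : Type*} {A : Set Y} (f : A → X) : Type _ := Quot (AdjRel f)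

instance {X Y : Type*} [TopologicalSpace X] [TopologicalSpace Y] {A : Set Y} (f : A → X) :
    TopologicalSpace (AdjSpace f) :=
  inferInstanceAs (TopologicalSpace (Quot (AdjRel f)))

/-- The canonical (closed) embedding `X → X ∪_f Y`. -/
def adjInc {X Y : Type*} {A : Set Y} (f : A → X) : X → AdjSpace f :=
  fun x => Quot.mk _ (Sum.inl x)

/-- The canonical map `p : Y → X ∪_f Y`. -/
def adjP {X Y : Type*} {A : Set Y} (f : A → X) : Y → AdjSpace f :=
  fun y => Quot.mk _ (Sum.inr y)

variable {VE EE VF EF : Type*}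

/-- The source map `s_∪` of the adjunction graph `E ∪_m F`. -/
def adjS (gE : GraphData VE EE) (gF : GraphData VF EF) {G0 : Set VF} {G1 : Set EF}
    (m0 : G0 → VE) (m1 : G1 → EE) (hs : Set.MapsTo gF.s G1 G0)
    (hF1s : ∀ e : G1, gE.s (m1 e) = m0 ⟨gF.s e, hs e.2⟩) :
    AdjSpace m1 → AdjSpace m0 :=
  Quot.lift
    (fun x => match x with
      | Sum.inl e => adjInc m0 (gE.s e)
      | Sum.inr e => adjP m0 (gF.s e))
    (by
      rintro _ _ ⟨a⟩
      show adjInc m0 (gE.s (m1 a)) = adjP m0 (gF.s a.1)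
      rw [hF1s a]
      exact Quot.sound (AdjRel.glue ⟨gF.s a.1, hs a.2⟩))

/-- The range map `r_∪` of the adjunction graph `E ∪_m F`. -/
def adjR (gE : GraphData VE EE) (gF : GraphData VF EF) {G0 : Set VF} {G1 : Set EF}
    (m0 : G0 → VE) (m1 : G1 → EE) (hr : Set.MapsTo gF.r G1 G0)
    (hF1r : ∀ e : G1, gE.r (m1 e) = m0 ⟨gF.r e, hr e.2⟩) :
    AdjSpace m1 → AdjSpace m0 :=
  Quot.lift
    (fun x => match x with
      | Sum.inl e => adjInc m0 (gE.r e)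
      | Sum.inr e => adjP m0 (gF.r e))
    (by
      rintro _ _ ⟨a⟩
      show adjInc m0 (gE.r (m1 a)) = adjP m0 (gF.r a.1)
      rw [hF1r a]
      exact Quot.sound (AdjRel.glue ⟨gF.r a.1, hr a.2⟩))

/-- The adjunction graph `E ∪_m F`, obtained by attaching the topological graph `F` to the
topological graph `E` along a closed subgraph `(G0, G1)` of `F` via the pair `(m¹, m⁰)`. -/
def adjGraph (gE : GraphData VE EE) (gF : GraphData VF EF) {G0 : Set VF} {G1 : Set EF}
    (m0 : G0 → VE) (m1 : G1 → EE)
    (hs : Set.MapsTo gF.s G1 G0) (hr : Set.MapsTo gF.r G1 G0)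
    (hF1s : ∀ e : G1, gE.s (m1 e) = m0 ⟨gF.s e, hs e.2⟩)
    (hF1r : ∀ e : G1, gE.r (m1 e) = m0 ⟨gF.r e, hr e.2⟩) :
    GraphData (AdjSpace m0) (AdjSpace m1) where
  s := adjS gE gF m0 m1 hs hF1s
  r := adjR gE gF m0 m1 hr hF1r

end Adjunction

/-! ### Auxiliary lemmas -/

section AuxLemmas

variable {X Y : Type*} {A : Set Y}

open scoped Classical in
/-- Normal form of elements of the underlying sum of an adjunction space. -/
noncomputable def adjNorm (f : A → X) : X ⊕ Y → X ⊕ Y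
  | .inl x => .inl x
  | .inr y => if h : y ∈ A then .inl (f ⟨y, h⟩) else .inr y

theorem adjNorm_inl (f : A → X) (x : X) : adjNorm f (.inl x) = .inl x := rfl

theorem adjNorm_inr_mem (f : A → X) {y : Y} (h : y ∈ A) :
    adjNorm f (.inr y) = .inl (f ⟨y, h⟩) := dif_pos h

theorem adjNorm_inr_not (f : A → X) {y : Y} (h : y ∉ A) :
    adjNorm f (.inr y) = .inr y := dif_neg h

theorem adjNorm_respects (f : A → X) :
    ∀ u v, AdjRel f u v → adjNorm f u = adjNorm f v := by
  rintro _ _ ⟨a⟩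
  rw [adjNorm_inr_mem f a.2]
  rfl

theorem adj_mk_eq_norm (f : A → X) (z : X ⊕ Y) :
    Quot.mk (AdjRel f) z = Quot.mk _ (adjNorm f z) := by
  rcases z with x | y
  · rfl
  · by_cases h : y ∈ A
    · rw [adjNorm_inr_mem f h]
      exact (Quot.sound (AdjRel.glue ⟨y, h⟩)).symm
    · rw [adjNorm_inr_not f h]

theorem adj_mk_eq_iff (f : A → X) (u v : X ⊕ Y) :
    Quot.mk (AdjRel f) u = Quot.mk _ v ↔ adjNorm f u = adjNorm f v := by
  constructor
  · intro h
    exact congrArg (Quot.lift (adjNorm f) (adjNorm_respects f)) h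
  · intro h
    rw [adj_mk_eq_norm f u, adj_mk_eq_norm f v, h]

theorem adjInc_injective (f : A → X) {x x' : X} (h : adjInc f x = adjInc f x') : x = x' :=
  Sum.inl_injective ((adj_mk_eq_iff f _ _).1 h)

theorem adjP_eq_adjInc (f : A → X) {y : Y} {x : X} (h : adjP f y = adjInc f x) :
    ∃ hy : y ∈ A, f ⟨y, hy⟩ = x := by
  have h' := (adj_mk_eq_iff f _ _).1 h
  rw [adjNorm_inl] at h'
  by_cases hy : y ∈ A
  · rw [adjNorm_inr_mem f hy] at h'
    exact ⟨hy, Sum.inl_injective h'⟩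
  · rw [adjNorm_inr_not f hy] at h'
    simp at h'

theorem adjP_glue (f : A → X) {y : Y} (h : y ∈ A) : adjP f y = adjInc f (f ⟨y, h⟩) :=
  (Quot.sound (AdjRel.glue ⟨y, h⟩)).symm

theorem continuous_adjInc [TopologicalSpace X] [TopologicalSpace Y] (f : A → X) :
    Continuous (adjInc f) := continuous_quot_mk.comp continuous_inl

theorem continuous_adjP [TopologicalSpace X] [TopologicalSpace Y] (f : A → X) :
    Continuous (adjP f) := continuous_quot_mk.comp continuous_inr

theorem mem_closure_inter_of_isOpen {Z : Type*} [TopologicalSpace Z] {s U : Set Z} {x : Z}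
    (hx : x ∈ closure s) (hU : IsOpen U) (hxU : x ∈ U) : x ∈ closure (s ∩ U) := by
  rw [mem_closure_iff] at hx ⊢
  intro o ho hxo
  obtain ⟨z, ⟨hzo, hzU⟩, hzs⟩ := hx (o ∩ U) (ho.inter hU) ⟨hxo, hxU⟩
  exact ⟨z, hzo, hzs, hzU⟩

/-- A proper continuous map into a locally compact Hausdorff space is a closed map. -/
theorem ProperCont.isClosedMap {Z W : Type*} [TopologicalSpace Z] [TopologicalSpace W]
    [T2Space W] [LocallyCompactSpace W] {f : Z → W} (hf : ProperCont f) : IsClosedMap f := by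
  intro S hS
  refine isClosed_of_closure_subset fun x hx => ?_
  obtain ⟨K, hKc, hKn⟩ := exists_compact_mem_nhds x
  have h1 : x ∈ closure (f '' S ∩ interior K) :=
    mem_closure_inter_of_isOpen hx isOpen_interior (mem_interior_iff_mem_nhds.2 hKn)
  have h2 : f '' S ∩ interior K ⊆ f '' (S ∩ f ⁻¹' K) := by
    rintro w ⟨⟨z, hz, rfl⟩, hw⟩
    exact ⟨z, ⟨hz, (interior_subset hw : f z ∈ K)⟩, rfl⟩
  have h3 : IsCompact (f '' (S ∩ f ⁻¹' K)) := (((hf.2 K hKc).inter_left hS)).image hf.1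
  have h4 := closure_mono h2 h1
  rw [h3.isClosed.closure_eq] at h4
  exact (image_mono (f := f) inter_subset_left) h4

theorem isCompact_preimage_inl [TopologicalSpace X] [TopologicalSpace Y]
    {K : Set (X ⊕ Y)} (hK : IsCompact K) : IsCompact (Sum.inl ⁻¹' K : Set X) := by
  rw [(IsEmbedding.inl : IsEmbedding (Sum.inl : X → X ⊕ Y)).isCompact_iff,
    image_preimage_eq_inter_range]
  exact hK.inter_right isClosed_range_inl

theorem isCompact_preimage_inr [TopologicalSpace X] [TopologicalSpace Y]
    {K : Set (X ⊕ Y)} (hK : IsCompact K) : IsCompact (Sum.inr ⁻¹' K : Set Y) := by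
  rw [(IsEmbedding.inr : IsEmbedding (Sum.inr : Y → X ⊕ Y)).isCompact_iff,
    image_preimage_eq_inter_range]
  exact hK.inter_right isClosed_range_inr

theorem mem_adjNorm_image_inl_iff [TopologicalSpace X] (f : A → X) (C : Set (X ⊕ Y)) (x : X) :
    Sum.inl x ∈ adjNorm f '' C ↔
      x ∈ Sum.inl ⁻¹' C ∪ f '' (Subtype.val ⁻¹' (Sum.inr ⁻¹' C)) := by
  constructor
  · rintro ⟨c, hc, hcx⟩
    rcases c with x' | y'
    · rw [adjNorm_inl] at hcx
      exact Or.inl (by rwa [← Sum.inl_injective hcx])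
    · by_cases hy' : y' ∈ A
      · rw [adjNorm_inr_mem f hy'] at hcx
        exact Or.inr ⟨⟨y', hy'⟩, hc, Sum.inl_injective hcx⟩
      · rw [adjNorm_inr_not f hy'] at hcx
        simp at hcx
  · rintro (hx | ⟨a, ha, rfl⟩)
    · exact ⟨Sum.inl x, hx, rfl⟩
    · exact ⟨Sum.inr a.1, ha, by rw [adjNorm_inr_mem f a.2]⟩

/-- The quotient map onto an adjunction space is a closed map, provided the gluing set is
closed and the gluing map is proper. -/
theorem adj_quot_mk_isClosedMap [TopologicalSpace X] [TopologicalSpace Y]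
    [T2Space X] [LocallyCompactSpace X] (hA : IsClosed A)
    {f : A → X} (hf : ProperCont f) : IsClosedMap (Quot.mk (AdjRel f)) := by
  intro C hC
  rw [← isQuotientMap_quot_mk.isClosed_preimage]
  have hsat : Quot.mk (AdjRel f) ⁻¹' (Quot.mk (AdjRel f) '' C) = adjNorm f ⁻¹' (adjNorm f '' C) := by
    ext z
    simp only [mem_preimage, mem_image]
    exact ⟨fun ⟨c, hc, hcz⟩ => ⟨c, hc, (adj_mk_eq_iff f c z).1 hcz⟩,
      fun ⟨c, hc, hcz⟩ => ⟨c, hc, (adj_mk_eq_iff f c z).2 hcz⟩⟩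
  rw [hsat]
  have hCX : IsClosed (Sum.inl ⁻¹' C : Set X) := hC.preimage continuous_inl
  have hCY : IsClosed (Sum.inr ⁻¹' C : Set Y) := hC.preimage continuous_inr
  have hTc : IsClosed (Sum.inl ⁻¹' C ∪ f '' (Subtype.val ⁻¹' (Sum.inr ⁻¹' C)) : Set X) :=
    hCX.union (hf.isClosedMap _ (hCY.preimage continuous_subtype_val))
  rw [isClosed_sum_iff]
  constructor
  · have h1 : Sum.inl ⁻¹' (adjNorm f ⁻¹' (adjNorm f '' C)) =
        Sum.inl ⁻¹' C ∪ f '' (Subtype.val ⁻¹' (Sum.inr ⁻¹' C)) := by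
      ext x
      simp only [mem_preimage, adjNorm_inl]
      exact mem_adjNorm_image_inl_iff f C x
    rw [h1]
    exact hTc
  · have h2 : Sum.inr ⁻¹' (adjNorm f ⁻¹' (adjNorm f '' C)) =
        Subtype.val '' (f ⁻¹' (Sum.inl ⁻¹' C ∪ f '' (Subtype.val ⁻¹' (Sum.inr ⁻¹' C))))
          ∪ Sum.inr ⁻¹' C := by
      ext y
      simp only [mem_preimage, mem_union]
      constructor
      · intro hy
        by_cases hyA : y ∈ A
        · rw [adjNorm_inr_mem f hyA] at hy
          exact Or.inl ⟨⟨y, hyA⟩, (mem_adjNorm_image_inl_iff f C _).1 hy, rfl⟩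
        · rw [adjNorm_inr_not f hyA] at hy
          obtain ⟨c, hc, hcy⟩ := hy
          rcases c with x' | y'
          · rw [adjNorm_inl] at hcy
            simp at hcy
          · by_cases hy' : y' ∈ A
            · rw [adjNorm_inr_mem f hy'] at hcy
              simp at hcy
            · rw [adjNorm_inr_not f hy'] at hcy
              exact Or.inr (by rwa [← Sum.inr_injective hcy])
      · rintro (⟨a, ha, rfl⟩ | hy)
        · rw [adjNorm_inr_mem f a.2]
          exact (mem_adjNorm_image_inl_iff f C _).2 ha
        · exact ⟨Sum.inr y, hy, rfl⟩
    rw [h2]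
    exact ((hA.isClosedEmbedding_subtypeVal.isClosedMap) _ (hTc.preimage hf.1)).union hCY

/-- The quotient map onto an adjunction space is proper. -/
theorem adj_quot_mk_isProperMap [TopologicalSpace X] [TopologicalSpace Y]
    [T2Space X] [LocallyCompactSpace X] (hA : IsClosed A)
    {f : A → X} (hf : ProperCont f) : IsProperMap (Quot.mk (AdjRel f)) := by
  rw [isProperMap_iff_isClosedMap_and_compact_fibers]
  refine ⟨continuous_quot_mk, adj_quot_mk_isClosedMap hA hf, fun c => ?_⟩
  obtain ⟨w, rfl⟩ := Quot.exists_rep c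
  have hfib : Quot.mk (AdjRel f) ⁻¹' {Quot.mk (AdjRel f) w} = adjNorm f ⁻¹' {adjNorm f w} := by
    ext z
    simp only [mem_preimage, mem_singleton_iff]
    exact ⟨fun h => (adj_mk_eq_iff f z w).1 h, fun h => (adj_mk_eq_iff f z w).2 h⟩
  rw [hfib]
  rcases hn : adjNorm f w with x0 | y0
  · have heq : adjNorm f ⁻¹' {Sum.inl x0} =
        Sum.inl '' {x0} ∪ Sum.inr '' (Subtype.val '' (f ⁻¹' {x0})) := by
      ext z
      constructor
      · intro hz
        rcases z with x | y
        · rw [mem_preimage, adjNorm_inl, mem_singleton_iff] at hz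
          exact Or.inl ⟨x0, rfl, hz.symm⟩
        · by_cases hy : y ∈ A
          · rw [mem_preimage, adjNorm_inr_mem f hy, mem_singleton_iff] at hz
            exact Or.inr ⟨y, ⟨⟨y, hy⟩, Sum.inl_injective hz, rfl⟩, rfl⟩
          · rw [mem_preimage, adjNorm_inr_not f hy, mem_singleton_iff] at hz
            simp at hz
      · rintro (⟨x', rfl, rfl⟩ | ⟨y, ⟨a, ha, rfl⟩, rfl⟩)
        · rw [mem_preimage, adjNorm_inl]
          rfl
        · rw [mem_preimage, adjNorm_inr_mem f a.2, mem_singleton_iff]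
          exact congrArg Sum.inl ha
    rw [heq]
    exact (isCompact_singleton.image continuous_inl).union
      (((hf.2 _ isCompact_singleton).image continuous_subtype_val).image continuous_inr)
  · refine Set.Finite.isCompact ((finite_singleton (Sum.inr y0 : X ⊕ Y)).subset ?_)
    intro z hz
    rcases z with x | y
    · rw [mem_preimage, adjNorm_inl, mem_singleton_iff] at hz
      simp at hz
    · by_cases hy : y ∈ A
      · rw [mem_preimage, adjNorm_inr_mem f hy, mem_singleton_iff] at hz
        simp at hz
      · rw [mem_preimage, adjNorm_inr_not f hy, mem_singleton_iff] at hz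
        exact hz

theorem GraphData.finSet_isOpen {V E : Type*} [TopologicalSpace V] [TopologicalSpace E]
    (g : GraphData V E) : IsOpen g.finSet := by
  rw [isOpen_iff_mem_nhds]
  rintro v ⟨U, hU, hK⟩
  exact Filter.mem_of_superset (interior_mem_nhds.2 hU)
    fun w hw => ⟨U, mem_nhds_iff.2 ⟨interior U, interior_subset, isOpen_interior, hw⟩, hK⟩

theorem GraphData.regSet_isOpen {V E : Type*} [TopologicalSpace V] [TopologicalSpace E]
    (g : GraphData V E) : IsOpen g.regSet :=
  g.finSet_isOpen.sdiff isClosed_closure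

theorem GraphData.singSet_isClosed {V E : Type*} [TopologicalSpace V] [TopologicalSpace E]
    (g : GraphData V E) : IsClosed g.singSet :=
  g.regSet_isOpen.isClosed_compl

theorem GraphData.regSet_subset_closure_range {V E : Type*} [TopologicalSpace V]
    [TopologicalSpace E] (g : GraphData V E) : g.regSet ⊆ closure (range g.s) := by
  intro v hv
  by_contra h
  exact hv.2 (subset_closure h)

theorem GraphData.finSet_inter_closure_subset {V E : Type*} [TopologicalSpace V]
    [TopologicalSpace E] [T2Space V] (g : GraphData V E) (hs : Continuous g.s) :
    g.finSet ∩ closure (range g.s) ⊆ range g.s := by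
  rintro v ⟨⟨U, hU, hK⟩, hcl⟩
  have h1 : v ∈ closure (range g.s ∩ interior U) :=
    mem_closure_inter_of_isOpen hcl isOpen_interior (mem_interior_iff_mem_nhds.2 hU)
  have h2 : range g.s ∩ interior U ⊆ g.s '' (g.s ⁻¹' U) := by
    rintro w ⟨⟨e, rfl⟩, hw⟩
    exact ⟨e, (interior_subset hw : g.s e ∈ U), rfl⟩
  have h3 := closure_mono h2 h1
  rw [((hK.image hs).isClosed).closure_eq] at h3
  exact image_subset_range _ _ h3

end AuxLemmas

/-- Let `E ∪_m F` be an adjunction topological graph such that `G⁰` is negatively invariant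
in `F⁰` and `m : G → E` satisfies (F3). Then `E⁰` is negatively invariant in `(E ∪_m F)⁰`
if and only if the canonical pair `p = (p¹, p⁰)` satisfies (F3), i.e.
`p⁰(F⁰_sing) ⊆ (E ∪_m F)⁰_sing`. -/
theorem adjGraph_negInvariant_iff_F3
    {VE EE VF EF : Type*} [TopologicalSpace VE] [TopologicalSpace EE]
    [TopologicalSpace VF] [TopologicalSpace EF]
    [LocallyCompactSpace VE] [T2Space VE] [LocallyCompactSpace EE] [T2Space EE]
    [LocallyCompactSpace VF] [T2Space VF] [LocallyCompactSpace EF] [T2Space EF]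
    (gE : GraphData VE EE) (gF : GraphData VF EF)
    (hE : IsTopGraph gE) (hF : IsTopGraph gF)
    {G0 : Set VF} {G1 : Set EF} (hG : IsClosedSubgraph gF G0 G1)
    (hpre : gF.r ⁻¹' G0 ⊆ G1)
    (m0 : G0 → VE) (m1 : G1 → EE) (hm0 : ProperCont m0) (hm1 : ProperCont m1)
    (hF1s : ∀ e : G1, gE.s (m1 e) = m0 ⟨gF.s e, hG.s_maps e.2⟩)
    (hF1r : ∀ e : G1, gE.r (m1 e) = m0 ⟨gF.r e, hG.r_maps e.2⟩)
    (hGneg : gF.NegInvariant G0)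
    (hF3 : m0 '' (gF.restrict G0 G1 hG.s_maps hG.r_maps).singSet ⊆ gE.singSet) :
    (adjGraph gE gF m0 m1 hG.s_maps hG.r_maps hF1s hF1r).NegInvariant
        (Set.range (adjInc m0)) ↔
      adjP m0 '' gF.singSet ⊆
        (adjGraph gE gF m0 m1 hG.s_maps hG.r_maps hF1s hF1r).singSet := by
  have hq1 : IsProperMap (Quot.mk (AdjRel m1)) := adj_quot_mk_isProperMap hG.closed1 hm1
  have hq0closed : IsClosedMap (Quot.mk (AdjRel m0)) := adj_quot_mk_isClosedMap hG.closed0 hm0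
  have finP : ∀ y : VF,
      adjP m0 y ∈ (adjGraph gE gF m0 m1 hG.s_maps hG.r_maps hF1s hF1r).finSet →
      y ∈ gF.finSet := by
    rintro y ⟨U, hU, hK⟩
    refine ⟨adjP m0 ⁻¹' U, (continuous_adjP m0).continuousAt.preimage_mem_nhds hU, ?_⟩
    have heqU : gF.s ⁻¹' (adjP m0 ⁻¹' U) =
        Sum.inr ⁻¹' (Quot.mk (AdjRel m1) ⁻¹'
          ((adjGraph gE gF m0 m1 hG.s_maps hG.r_maps hF1s hF1r).s ⁻¹' U)) := rfl
    rw [heqU]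
    exact isCompact_preimage_inr (hq1.isCompact_preimage hK)
  have finI : ∀ x : VE,
      adjInc m0 x ∈ (adjGraph gE gF m0 m1 hG.s_maps hG.r_maps hF1s hF1r).finSet →
      x ∈ gE.finSet := by
    rintro x ⟨U, hU, hK⟩
    refine ⟨adjInc m0 ⁻¹' U, (continuous_adjInc m0).continuousAt.preimage_mem_nhds hU, ?_⟩
    have heqU : gE.s ⁻¹' (adjInc m0 ⁻¹' U) =
        Sum.inl ⁻¹' (Quot.mk (AdjRel m1) ⁻¹'
          ((adjGraph gE gF m0 m1 hG.s_maps hG.r_maps hF1s hF1r).s ⁻¹' U)) := rfl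
    rw [heqU]
    exact isCompact_preimage_inl (hq1.isCompact_preimage hK)
  have hrange : range (adjGraph gE gF m0 m1 hG.s_maps hG.r_maps hF1s hF1r).s ⊆
      Quot.mk (AdjRel m0) '' (Sum.inl '' range gE.s ∪ Sum.inr '' range gF.s) := by
    rintro v ⟨eqq, rfl⟩
    obtain ⟨w, rfl⟩ := Quot.exists_rep eqq
    rcases w with e | e
    · exact ⟨Sum.inl (gE.s e), Or.inl ⟨gE.s e, ⟨e, rfl⟩, rfl⟩, rfl⟩
    · exact ⟨Sum.inr (gF.s e), Or.inr ⟨gF.s e, ⟨e, rfl⟩, rfl⟩, rfl⟩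
  have hclosedU : IsClosed (Sum.inl '' closure (range gE.s) ∪
      Sum.inr '' closure (range gF.s)) := by
    rw [isClosed_sum_iff]
    constructor
    · have h1 : Sum.inl ⁻¹' (Sum.inl '' closure (range gE.s) ∪
          Sum.inr '' closure (range gF.s)) = closure (range gE.s) := by
        ext u; simp
      rw [h1]; exact isClosed_closure
    · have h2 : Sum.inr ⁻¹' (Sum.inl '' closure (range gE.s) ∪
          Sum.inr '' closure (range gF.s)) = closure (range gF.s) := by
        ext u; simp
      rw [h2]; exact isClosed_closure
  have hclrange :
      closure (range (adjGraph gE gF m0 m1 hG.s_maps hG.r_maps hF1s hF1r).s) ⊆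
      Quot.mk (AdjRel m0) ''
        (Sum.inl '' closure (range gE.s) ∪ Sum.inr '' closure (range gF.s)) := by
    have h1 : closure (Sum.inl '' range gE.s ∪ Sum.inr '' range gF.s) ⊆
        Sum.inl '' closure (range gE.s) ∪ Sum.inr '' closure (range gF.s) :=
      closure_minimal (union_subset_union (image_mono subset_closure)
        (image_mono subset_closure)) hclosedU
    exact (closure_mono hrange).trans
      ((hq0closed.closure_image_subset _).trans (image_mono h1))
  have hsinkP : ∀ z, z ∉ G0 → z ∈ gF.sinkSet →
      adjP m0 z ∈ (adjGraph gE gF m0 m1 hG.s_maps hG.r_maps hF1s hF1r).sinkSet := by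
    intro z hz hzs hmem
    obtain ⟨w, hw, hqe⟩ := hclrange hmem
    have hn := (adj_mk_eq_iff m0 w (Sum.inr z)).1 hqe
    rw [adjNorm_inr_not m0 hz] at hn
    rcases hw with ⟨x, hxcl, rfl⟩ | ⟨y, hycl, rfl⟩
    · rw [adjNorm_inl] at hn
      simp at hn
    · by_cases hyA : y ∈ G0
      · rw [adjNorm_inr_mem m0 hyA] at hn
        simp at hn
      · rw [adjNorm_inr_not m0 hyA] at hn
        exact hzs (Sum.inr_injective hn ▸ hycl)
  have hNegCons :
      (adjGraph gE gF m0 m1 hG.s_maps hG.r_maps hF1s hF1r).NegInvariant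
        (range (adjInc m0)) →
      ∀ z : VE, adjInc m0 z ∈
        (adjGraph gE gF m0 m1 hG.s_maps hG.r_maps hF1s hF1r).regSet →
        z ∈ range gE.s := by
    intro hLHS z hz
    obtain ⟨eqq, hse, hre⟩ := hLHS (adjInc m0 z) ⟨⟨z, rfl⟩, hz⟩
    obtain ⟨w, rfl⟩ := Quot.exists_rep eqq
    rcases w with e | e
    · exact ⟨e, adjInc_injective m0 hse⟩
    · obtain ⟨xx, hxx⟩ := hre
      obtain ⟨hG0r, -⟩ := adjP_eq_adjInc m0 (hxx.symm :
        adjP m0 (gF.r e) = adjInc m0 xx)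
      have heG1 : e ∈ G1 := hpre hG0r
      obtain ⟨hG0s, hms⟩ := adjP_eq_adjInc m0 (hse :
        adjP m0 (gF.s e) = adjInc m0 z)
      exact ⟨m1 ⟨e, heG1⟩, by rw [hF1s ⟨e, heG1⟩]; exact hms⟩
  constructor
  · -- Negative invariance implies (F3) for the canonical pair.
    intro hLHS
    rintro v ⟨y, hy, rfl⟩
    intro hreg
    have hfinF : y ∈ gF.finSet := finP y hreg.1
    have hclsink : y ∈ closure gF.sinkSet := by
      by_contra h
      exact hy ⟨hfinF, h⟩
    rw [← Set.diff_union_inter gF.sinkSet G0, closure_union] at hclsink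
    rcases hclsink with hcase | hcase
    · exact hreg.2 (map_mem_closure (continuous_adjP m0) hcase
        (fun z hz => hsinkP z hz.2 hz.1))
    · have hyG0 : y ∈ G0 := by
        have := closure_mono (inter_subset_right : gF.sinkSet ∩ G0 ⊆ G0) hcase
        rwa [hG.closed0.closure_eq] at this
      have hycl : (⟨y, hyG0⟩ : G0) ∈ closure (Subtype.val ⁻¹' (gF.sinkSet ∩ G0)) := by
        rw [closure_subtype]
        have himg : Subtype.val '' (Subtype.val ⁻¹' (gF.sinkSet ∩ G0) : Set G0) =
            gF.sinkSet ∩ G0 := by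
          rw [image_preimage_eq_inter_range, Subtype.range_coe, inter_assoc, inter_self]
        rw [himg]
        exact hcase
      have hsingmap : MapsTo m0 (Subtype.val ⁻¹' (gF.sinkSet ∩ G0)) gE.singSet := by
        rintro a ⟨hask, -⟩
        apply hF3
        refine ⟨a, ?_, rfl⟩
        intro hregG
        apply hregG.2
        apply subset_closure
        intro hclG
        apply hask
        refine closure_mono ?_ (closure_subtype.1 hclG)
        rintro _ ⟨b, ⟨e1, rfl⟩, rfl⟩
        exact ⟨e1.1, rfl⟩
      have hsingE : m0 ⟨y, hyG0⟩ ∈ gE.singSet := by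
        have := map_mem_closure hm0.1 hycl hsingmap
        rwa [gE.singSet_isClosed.closure_eq] at this
      have heq : adjP m0 y = adjInc m0 (m0 ⟨y, hyG0⟩) := adjP_glue m0 hyG0
      have hreg' : adjInc m0 (m0 ⟨y, hyG0⟩) ∈
          (adjGraph gE gF m0 m1 hG.s_maps hG.r_maps hF1s hF1r).regSet := heq ▸ hreg
      have hfinE : m0 ⟨y, hyG0⟩ ∈ gE.finSet := finI _ hreg'.1
      have hclE : m0 ⟨y, hyG0⟩ ∈ closure gE.sinkSet := by
        by_contra h
        exact hsingE ⟨hfinE, h⟩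
      obtain ⟨z, hzo, hzsink⟩ := mem_closure_iff.1 hclE _
        ((adjGraph gE gF m0 m1 hG.s_maps hG.r_maps hF1s hF1r).regSet_isOpen.preimage
          (continuous_adjInc m0)) hreg'
      exact hzsink (subset_closure (hNegCons hLHS z hzo))
  · -- (F3) for the canonical pair implies negative invariance.
    intro hRHS
    rintro v ⟨⟨x, rfl⟩, hreg⟩
    by_cases hx : ∃ yy : G0, m0 yy = x
    · obtain ⟨⟨y, hyG0⟩, rfl⟩ := hx
      have heq : adjP m0 y = adjInc m0 (m0 ⟨y, hyG0⟩) := adjP_glue m0 hyG0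
      have hyreg : y ∈ gF.regSet := by
        by_contra h
        have := hRHS ⟨y, h, rfl⟩
        rw [heq] at this
        exact this hreg
      obtain ⟨e, hse, hreG0⟩ := hGneg y ⟨hyG0, hyreg⟩
      have heG1 : e ∈ G1 := hpre hreG0
      refine ⟨Quot.mk _ (Sum.inl (m1 ⟨e, heG1⟩)), ?_, ⟨gE.r (m1 ⟨e, heG1⟩), rfl⟩⟩
      show adjInc m0 (gE.s (m1 ⟨e, heG1⟩)) = adjInc m0 (m0 ⟨y, hyG0⟩)
      rw [hF1s ⟨e, heG1⟩]
      exact congrArg (adjInc m0) (congrArg m0 (Subtype.ext hse))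
    · have hcl : adjInc m0 x ∈
          closure (range (adjGraph gE gF m0 m1 hG.s_maps hG.r_maps hF1s hF1r).s) :=
        (adjGraph gE gF m0 m1 hG.s_maps hG.r_maps hF1s hF1r).regSet_subset_closure_range hreg
      obtain ⟨w, hw, hqe⟩ := hclrange hcl
      have hn := (adj_mk_eq_iff m0 w (Sum.inl x)).1 hqe
      rw [adjNorm_inl] at hn
      rcases hw with ⟨x', hx', rfl⟩ | ⟨y', hy', rfl⟩
      · rw [adjNorm_inl] at hn
        rw [Sum.inl_injective hn] at hx'
        have hfinE : x ∈ gE.finSet := finI x hreg.1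
        obtain ⟨e, he⟩ := gE.finSet_inter_closure_subset hE.s_cont ⟨hfinE, hx'⟩
        exact ⟨Quot.mk _ (Sum.inl e), congrArg (adjInc m0) he, ⟨gE.r e, rfl⟩⟩
      · by_cases hyA : y' ∈ G0
        · rw [adjNorm_inr_mem m0 hyA] at hn
          exact absurd ⟨⟨y', hyA⟩, Sum.inl_injective hn⟩ hx
        · rw [adjNorm_inr_not m0 hyA] at hn
          simp at hn
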